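/- Let g(x) = −log(max_{s=1,...,n} x_s) be defined on the region {x ∈ ℝ^n : x ≥ 0, x ≠ 0} (and +∞ outside). Then for every integer k with 1 ≤ k ≤ n, the k-th nonconvexity satisfies ρ^k(g) = log k, and for every k ≥ n+1, ρ^k(g) = log n. -/
import Mathlib


/-- The `k`-th nonconvexity `ρᵏ(f)` of a function `f : E → ℝ ∪ {+∞}` (encoded with
values in `EReal`). -/
noncomputable def rhoK {E : Type*} [AddCommMonoid E] [Module ℝ E] (k : ℕ)
    (f : E → EReal) : EReal :=
  sSup {d : EReal | ∃ (x : Fin k → E) (α : Fin k → ℝ),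
    (∀ j, f (x j) ≠ ⊤) ∧ (∀ j, 0 ≤ α j) ∧ (∑ j, α j) = 1 ∧
    d = f (∑ j, α j • x j) - ∑ j, (α j : EReal) * f (x j)}


open Finset

private lemma ereal_coe_sum {ι : Type*} (s : Finset ι) (f : ι → ℝ) :
    ((∑ j ∈ s, f j : ℝ) : EReal) = ∑ j ∈ s, ((f j : ℝ) : EReal) := by
  classical
  induction s using Finset.cons_induction with
  | empty => simp
  | cons a s ha ih => rw [Finset.sum_cons, Finset.sum_cons, EReal.coe_add, ih]

private lemma fin_ciSup_eq {n : ℕ} (hn : 0 < n) (x : Fin n → ℝ) {M : ℝ}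
    (hub : ∀ s, x s ≤ M) (hmem : ∃ s, x s = M) : (⨆ s, x s) = M := by
  have : Nonempty (Fin n) := ⟨⟨0, hn⟩⟩
  obtain ⟨s, hs⟩ := hmem
  exact le_antisymm (ciSup_le hub) (hs ▸ le_ciSup (Set.Finite.bddAbove (Set.finite_range x)) s)

private lemma sup_spec {n : ℕ} (hn : 0 < n) (x : Fin n → ℝ) (hx0 : ∀ s, 0 ≤ x s)
    (hxne : x ≠ 0) :
    (0 < ⨆ s, x s) ∧ (∀ s, x s ≤ ⨆ s, x s) ∧ ∃ s, x s = ⨆ s, x s := by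
  have : Nonempty (Fin n) := ⟨⟨0, hn⟩⟩
  obtain ⟨s₀, hs₀⟩ := Finite.exists_max x
  have heq : (⨆ s, x s) = x s₀ := fin_ciSup_eq hn x hs₀ ⟨s₀, rfl⟩
  have hpos : 0 < x s₀ := by
    obtain ⟨t, ht⟩ := Function.ne_iff.mp hxne
    have : 0 < x t := (hx0 t).lt_of_ne (by simpa using (Ne.symm ht))
    exact lt_of_lt_of_le this (hs₀ t)
  exact ⟨heq ▸ hpos, fun s => heq ▸ hs₀ s, ⟨s₀, heq.symm⟩⟩

private lemma key_ineq {k : ℕ} (α m : Fin k → ℝ) (hα : ∀ j, 0 ≤ α j)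
    (hsum : ∑ j, α j = 1) (hm : ∀ j, 0 < m j) {c M : ℝ} (hM : 0 < M)
    (hc : ∑ j, α j * m j ≤ c * M) :
    (-(Real.log M) - ∑ j, α j * (-(Real.log (m j)))) ≤ Real.log c := by
  have hS : 0 < ∑ j, α j * m j := by
    obtain ⟨j0, hj0⟩ : ∃ j, 0 < α j := by
      by_contra h
      push_neg at h
      have h0 : ∑ j, α j = 0 :=
        Finset.sum_eq_zero (fun j _ => le_antisymm (h j) (hα j))
      rw [h0] at hsum; norm_num at hsum
    exact Finset.sum_pos' (fun j _ => mul_nonneg (hα j) (hm j).le)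
      ⟨j0, Finset.mem_univ _, mul_pos hj0 (hm j0)⟩
  have hjensen : ∑ j, α j * Real.log (m j) ≤ Real.log (∑ j, α j * m j) := by
    have := strictConcaveOn_log_Ioi.concaveOn.le_map_sum (t := Finset.univ)
      (w := α) (p := m) (fun j _ => hα j) hsum (fun j _ => hm j)
    simpa [smul_eq_mul] using this
  have hcpos : 0 < c := by nlinarith
  have hlog : Real.log (∑ j, α j * m j) ≤ Real.log c + Real.log M := by
    calc Real.log (∑ j, α j * m j) ≤ Real.log (c * M) := Real.log_le_log hS hc
    _ = Real.log c + Real.log M := Real.log_mul hcpos.ne' hM.ne'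
  have hneg : ∑ j, α j * (-(Real.log (m j))) = -∑ j, α j * Real.log (m j) := by
    simp [mul_neg]
  rw [hneg]; linarith

private lemma exists_pos_weight {k : ℕ} (α : Fin k → ℝ) (hα : ∀ j, 0 ≤ α j)
    (hsum : ∑ j, α j = 1) : ∃ j, 0 < α j := by
  by_contra h
  push_neg at h
  have h0 : ∑ j, α j = 0 := Finset.sum_eq_zero (fun j _ => le_antisymm (h j) (hα j))
  rw [h0] at hsum; norm_num at hsum

private lemma rhoK_eq_min (n : ℕ) (hn : 0 < n) (g : (Fin n → ℝ) → EReal)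
    (hg_in : ∀ x : Fin n → ℝ, (∀ s, 0 ≤ x s) → x ≠ 0 →
      g x = ((-Real.log (⨆ s, x s) : ℝ) : EReal))
    (hg_out : ∀ x : Fin n → ℝ, ¬ ((∀ s, 0 ≤ x s) ∧ x ≠ 0) → g x = ⊤)
    (k : ℕ) (hk : 1 ≤ k) :
    rhoK k g = ((Real.log ((min k n : ℕ) : ℝ) : ℝ) : EReal) := by
  have hpk : min k n ≤ k := min_le_left _ _
  have hpn : min k n ≤ n := min_le_right _ _
  have hp1 : 1 ≤ min k n := le_min hk hn
  set p : ℕ := min k n with hp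
  have hp0 : (0:ℝ) < (p:ℝ) := by exact_mod_cast hp1
  apply le_antisymm
  · -- upper bound
    apply sSup_le
    rintro d ⟨x, α, hne, hα, hsum, rfl⟩
    have hdom : ∀ j, (∀ s, 0 ≤ x j s) ∧ x j ≠ 0 := by
      intro j
      by_contra h
      exact hne j (hg_out _ h)
    set m : Fin k → ℝ := fun j => ⨆ s, x j s with hm_def
    have hmspec : ∀ j, (0 < m j) ∧ (∀ s, x j s ≤ m j) ∧ ∃ s, x j s = m j :=
      fun j => sup_spec hn (x j) (hdom j).1 (hdom j).2
    set y : Fin n → ℝ := ∑ j, α j • x j with hy_def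
    have hys : ∀ s, y s = ∑ j, α j * x j s := by
      intro s
      rw [hy_def]
      simp [Finset.sum_apply]
    have hy0 : ∀ s, 0 ≤ y s := fun s => by
      rw [hys]; exact Finset.sum_nonneg fun j _ => mul_nonneg (hα j) ((hdom j).1 s)
    have hyne : y ≠ 0 := by
      obtain ⟨j0, hj0⟩ := exists_pos_weight α hα hsum
      obtain ⟨s0, hs0⟩ := (hmspec j0).2.2
      have h1 : α j0 * x j0 s0 ≤ y s0 := by
        rw [hys]
        exact Finset.single_le_sum
          (fun j _ => mul_nonneg (hα j) ((hdom j).1 s0)) (Finset.mem_univ j0)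
      have h2 : 0 < y s0 :=
        lt_of_lt_of_le (mul_pos hj0 (hs0 ▸ (hmspec j0).1)) h1
      intro h; rw [h] at h2; simp at h2
    have hM := sup_spec hn y hy0 hyne
    set M : ℝ := ⨆ s, y s with hM_def
    have hbk : ∑ j, α j * m j ≤ (k:ℝ) * M := by
      have hterm : ∀ j ∈ Finset.univ, α j * m j ≤ M := by
        intro j _
        obtain ⟨sj, hsj⟩ := (hmspec j).2.2
        calc α j * m j = α j * x j sj := by rw [hsj]
        _ ≤ y sj := by
            rw [hys]
            exact Finset.single_le_sum
              (fun i _ => mul_nonneg (hα i) ((hdom i).1 sj)) (Finset.mem_univ j)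
        _ ≤ M := hM.2.1 sj
      calc ∑ j, α j * m j ≤ ∑ _j : Fin k, M := Finset.sum_le_sum hterm
      _ = (k:ℝ) * M := by simp [Finset.sum_const, nsmul_eq_mul]
    have hbn : ∑ j, α j * m j ≤ (n:ℝ) * M := by
      have h1 : ∀ j ∈ Finset.univ, α j * m j ≤ α j * ∑ s, x j s := by
        intro j _
        refine mul_le_mul_of_nonneg_left ?_ (hα j)
        obtain ⟨sj, hsj⟩ := (hmspec j).2.2
        calc m j = x j sj := hsj.symm
        _ ≤ ∑ s, x j s := Finset.single_le_sum (fun s _ => (hdom j).1 s) (Finset.mem_univ sj)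
      calc ∑ j, α j * m j ≤ ∑ j, α j * ∑ s, x j s := Finset.sum_le_sum h1
      _ = ∑ s, y s := by
          simp_rw [Finset.mul_sum]
          rw [Finset.sum_comm]
          exact Finset.sum_congr rfl fun s _ => (hys s).symm
      _ ≤ ∑ _s : Fin n, M := Finset.sum_le_sum (fun s _ => hM.2.1 s)
      _ = (n:ℝ) * M := by simp [Finset.sum_const, nsmul_eq_mul]
    have hbound : ∑ j, α j * m j ≤ ((p:ℕ):ℝ) * M := by
      rcases le_total k n with h | h
      · rw [hp, min_eq_left h]; exact hbk
      · rw [hp, min_eq_right h]; exact hbn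
    have key := key_ineq α m hα hsum (fun j => (hmspec j).1) hM.1 hbound
    have hgy : g y = ((-Real.log M : ℝ) : EReal) := hg_in y hy0 hyne
    have hgx : ∀ j, g (x j) = ((-Real.log (m j) : ℝ) : EReal) :=
      fun j => hg_in _ (hdom j).1 (hdom j).2
    calc g y - ∑ j, (α j : EReal) * g (x j)
        = ((-Real.log M - ∑ j, α j * (-Real.log (m j)) : ℝ) : EReal) := by
          rw [hgy]
          simp_rw [hgx, ← EReal.coe_mul]
          rw [EReal.coe_sub, ereal_coe_sum]
    _ ≤ ((Real.log ((p:ℕ):ℝ) : ℝ) : EReal) := EReal.coe_le_coe_iff.mpr key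
  · -- lower bound: exhibit a witness
    set f : Fin k → Fin n := fun j => ⟨(j:ℕ) % n, Nat.mod_lt _ hn⟩ with hf
    set x : Fin k → Fin n → ℝ := fun j => Pi.single (f j) 1 with hx
    set α : Fin k → ℝ := fun j => if (j:ℕ) < p then 1/(p:ℝ) else 0 with hαdef
    have hαval : ∀ j, α j = if (j:ℕ) < p then 1/(p:ℝ) else 0 := fun _ => rfl
    have hxval : ∀ j s, x j s = if s = f j then 1 else 0 := fun j s => by
      rw [hx]; exact Pi.single_apply (f j) 1 s
    have hfval : ∀ j, ((f j):ℕ) = (j:ℕ) % n := fun _ => rfl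
    have hx0 : ∀ j s, 0 ≤ x j s := by
      intro j s
      rw [hxval]
      split <;> norm_num
    have hxne : ∀ j, x j ≠ 0 := by
      intro j h
      have h1 : x j (f j) = 0 := by rw [h]; rfl
      rw [hxval] at h1
      simp at h1
    have hgx : ∀ j, g (x j) = ((0:ℝ) : EReal) := by
      intro j
      rw [hg_in (x j) (hx0 j) (hxne j)]
      have hsup : (⨆ s, x j s) = 1 := by
        refine fin_ciSup_eq hn (x j) ?_ ⟨f j, by rw [hxval]; simp⟩
        intro s
        rw [hxval]
        split <;> norm_num
      rw [hsup, Real.log_one, neg_zero]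
    have hα0 : ∀ j, 0 ≤ α j := by
      intro j
      rw [hαval]
      split <;> positivity
    have hαsum : ∑ j, α j = 1 := by
      simp only [hαval]
      rw [Fin.sum_univ_eq_sum_range (fun i => if i < p then 1/(p:ℝ) else 0) k]
      rw [← Finset.sum_filter]
      have hfil : (Finset.range k).filter (fun i => i < p) = Finset.range p := by
        ext i
        simp only [Finset.mem_filter, Finset.mem_range]
        omega
      rw [hfil, Finset.sum_const, Finset.card_range, nsmul_eq_mul]
      field_simp
    set y : Fin n → ℝ := ∑ j, α j • x j with hy_def
    have hys : ∀ s, y s = ∑ j, α j * x j s := by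
      intro s
      rw [hy_def]
      simp [Finset.sum_apply]
    have hyval : ∀ s : Fin n, y s = if (s:ℕ) < p then 1/(p:ℝ) else 0 := by
      intro s
      rw [hys]
      by_cases hsp : (s:ℕ) < p
      · rw [if_pos hsp]
        have hsk : (s:ℕ) < k := lt_of_lt_of_le hsp hpk
        rw [Finset.sum_eq_single (⟨(s:ℕ), hsk⟩ : Fin k)]
        · have hfj0 : f ⟨(s:ℕ), hsk⟩ = s := by
            apply Fin.ext
            rw [hfval]
            exact Nat.mod_eq_of_lt s.2
          rw [hαval, hxval, hfj0]
          simp [hsp]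
        · intro j _ hj
          by_cases hjp : (j:ℕ) < p
          · have hfj : ((f j):ℕ) = (j:ℕ) := by
              rw [hfval]; exact Nat.mod_eq_of_lt (lt_of_lt_of_le hjp hpn)
            have hne2 : s ≠ f j := by
              intro h
              apply hj
              apply Fin.ext
              have h2 := congrArg Fin.val h
              rw [hfj] at h2
              simp [← h2]
            rw [hxval, if_neg hne2, mul_zero]
          · rw [hαval, if_neg hjp, zero_mul]
        · intro h; exact absurd (Finset.mem_univ _) h
      · rw [if_neg hsp]
        apply Finset.sum_eq_zero
        intro j _
        by_cases hjp : (j:ℕ) < p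
        · have hfj : ((f j):ℕ) = (j:ℕ) := by
            rw [hfval]; exact Nat.mod_eq_of_lt (lt_of_lt_of_le hjp hpn)
          have hne2 : s ≠ f j := by
            intro h
            apply hsp
            have h2 := congrArg Fin.val h
            rw [hfj] at h2
            omega
          rw [hxval, if_neg hne2, mul_zero]
        · rw [hαval, if_neg hjp, zero_mul]
    have hy0 : ∀ s, 0 ≤ y s := by
      intro s
      rw [hyval]
      split <;> positivity
    have hyne : y ≠ 0 := by
      intro h
      have h1 : y ⟨0, hn⟩ = 0 := by rw [h]; rfl
      rw [hyval] at h1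
      have hcond : ((⟨0, hn⟩ : Fin n) : ℕ) < p := hp1
      rw [if_pos hcond] at h1
      exact (one_div_ne_zero hp0.ne') h1
    have hsupy : (⨆ s, y s) = 1/(p:ℝ) := by
      refine fin_ciSup_eq hn y ?_
        ⟨⟨0, hn⟩, by rw [hyval]; exact if_pos (show ((⟨0, hn⟩ : Fin n) : ℕ) < p from hp1)⟩
      intro s
      rw [hyval]
      split
      · exact le_rfl
      · positivity
    have hgy : g y = ((Real.log (p:ℝ) : ℝ) : EReal) := by
      rw [hg_in y hy0 hyne, hsupy, one_div, Real.log_inv, neg_neg]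
    apply le_sSup
    refine ⟨x, α, ?_, hα0, hαsum, ?_⟩
    · intro j
      rw [hgx j]
      simp
    · rw [← hy_def, hgy]
      have hzero : ∑ j, (α j : EReal) * g (x j) = 0 := by
        apply Finset.sum_eq_zero
        intro j _
        rw [hgx j]
        simp
      rw [hzero, sub_zero]

/-- The `k`-th nonconvexity of `g(x) = −log(max_s x_s)` on `{x ≥ 0, x ≠ 0}` equals
`log k` for `1 ≤ k ≤ n` and `log n` for `k ≥ n+1`. -/
theorem rhoK_neg_log_max (n : ℕ) (hn : 0 < n) (g : (Fin n → ℝ) → EReal)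
    (hg_in : ∀ x : Fin n → ℝ, (∀ s, 0 ≤ x s) → x ≠ 0 →
      g x = ((-Real.log (⨆ s, x s) : ℝ) : EReal))
    (hg_out : ∀ x : Fin n → ℝ, ¬ ((∀ s, 0 ≤ x s) ∧ x ≠ 0) → g x = ⊤) :
    (∀ k : ℕ, 1 ≤ k → k ≤ n → rhoK k g = ((Real.log k : ℝ) : EReal)) ∧
    (∀ k : ℕ, n + 1 ≤ k → rhoK k g = ((Real.log n : ℝ) : EReal)) := by
  constructor
  · intro k hk1 hkn
    rw [rhoK_eq_min n hn g hg_in hg_out k hk1, min_eq_left hkn]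
  · intro k hk
    have hk1 : 1 ≤ k := by omega
    rw [rhoK_eq_min n hn g hg_in hg_out k hk1, min_eq_right (by omega : n ≤ k)]
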